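/- Under the ε-decay random sampling scheme with t_0 = 2·C_0·K, C_0 ≥ 10, and T > (t_0+1)²/e² − 1, the number n_k of random samples allocated to any fixed arm k up to time T satisfies C_0(1 + log(T+1) − log(t_0+1)) ≤ n_k ≤ 3·C_0(1 + log T − log t_0) with probability at least 1 − 2/(T+1). -/

import Mathlib

set_option maxHeartbeats 1000000


open MeasureTheory ProbabilityTheory

private lemma sum_Ioc_telescope (f : ℕ → ℝ) {m T : ℕ} (h : m ≤ T) :
    ∑ t ∈ Finset.Ioc m T, (f (t + 1) - f t) = f (T + 1) - f (m + 1) := by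
  induction T, h using Nat.le_induction with
  | base => simp
  | succ n hn ih =>
      rw [Finset.sum_Ioc_succ_top (by omega : m ≤ n), ih]
      ring

private lemma harmonic_lower {m T : ℕ} (hm : 1 ≤ m) (h : m ≤ T) :
    Real.log ((T : ℝ) + 1) - Real.log ((m : ℝ) + 1) ≤ ∑ t ∈ Finset.Ioc m T, (1 / (t : ℝ)) := by
  have htel := sum_Ioc_telescope (fun n => Real.log (n : ℝ)) h
  push_cast at htel
  rw [← htel]
  apply Finset.sum_le_sum
  intro t ht
  rw [Finset.mem_Ioc] at ht
  have htpos : (0 : ℝ) < t := by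
    have : 1 ≤ t := le_trans hm ht.1.le
    exact_mod_cast Nat.lt_of_lt_of_le Nat.zero_lt_one this
  have h1 : Real.log (((t : ℝ) + 1) / t) ≤ ((t : ℝ) + 1) / t - 1 :=
    Real.log_le_sub_one_of_pos (by positivity)
  rw [Real.log_div (by positivity) (ne_of_gt htpos)] at h1
  have h2 : ((t : ℝ) + 1) / t - 1 = 1 / t := by field_simp; ring
  linarith [h1, h2.le, h2.ge]

private lemma harmonic_upper {m T : ℕ} (hm : 2 ≤ m) (h : m ≤ T) :
    ∑ t ∈ Finset.Ioc m T, (1 / (t : ℝ)) ≤ Real.log (T : ℝ) - Real.log (m : ℝ) := by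
  have htel := sum_Ioc_telescope (fun n => Real.log ((n : ℝ) - 1)) h
  push_cast at htel
  have heq1 : ((T : ℝ) + 1) - 1 = (T : ℝ) := by ring
  have heq2 : ((m : ℝ) + 1) - 1 = (m : ℝ) := by ring
  rw [heq1, heq2] at htel
  rw [← htel]
  apply Finset.sum_le_sum
  intro t ht
  rw [Finset.mem_Ioc] at ht
  have ht2 : (2 : ℝ) ≤ (t : ℝ) := by
    have : 2 ≤ t := le_trans hm ht.1.le
    exact_mod_cast this
  have htpos : (0 : ℝ) < t := by linarith
  have h1 : Real.log (((t : ℝ) - 1) / t) ≤ ((t : ℝ) - 1) / t - 1 :=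
    Real.log_le_sub_one_of_pos (div_pos (by linarith) htpos)
  rw [Real.log_div (by linarith : ((t : ℝ) - 1) ≠ 0) (ne_of_gt htpos)] at h1
  have h2 : ((t : ℝ) - 1) / t - 1 = -(1 / t) := by field_simp; ring
  rw [show ((t : ℝ) + 1 - 1) = (t : ℝ) by ring]
  linarith [h1, h2.le, h2.ge]

/-- Under the ε-decay random sampling scheme with `t₀ = 2 C₀ K`, `C₀ ≥ 10`, and
`T > (t₀+1)²/e² − 1`, the number of random samples `n_k = ∑_{t=1}^T X_t` of a fixed arm
satisfies `C₀(1 + log(T+1) − log(t₀+1)) ≤ n_k ≤ 3C₀(1 + log T − log t₀)` with probability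
at least `1 − 2/(T+1)`. -/
theorem stmt_3 {Ω : Type*} [MeasurableSpace Ω] (μ : Measure Ω) [IsProbabilityMeasure μ]
    (T K : ℕ) (hK : 0 < K) (C0 t0 : ℝ) (hC0 : 10 ≤ C0) (ht0 : t0 = 2 * C0 * K)
    (hT : (T : ℝ) > (t0 + 1) ^ 2 / Real.exp 1 ^ 2 - 1)
    (X : ℕ → Ω → ℝ)
    (hmeas : ∀ t, Measurable (X t))
    (hindep : iIndepFun X μ)
    (hval : ∀ t ω, X t ω = 0 ∨ X t ω = 1)
    (hprob : ∀ t ∈ Finset.Icc 1 T,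
      μ {ω | X t ω = 1} = ENNReal.ofReal (min 1 (t0 / t) / K)) :
    1 - 2 / ((T : ℝ) + 1) ≤
      (μ {ω | C0 * (1 + Real.log (T + 1) - Real.log (t0 + 1)) ≤ ∑ t ∈ Finset.Icc 1 T, X t ω ∧
              ∑ t ∈ Finset.Icc 1 T, X t ω ≤ 3 * C0 * (1 + Real.log T - Real.log t0)}).toReal := by
  classical
  have hKpos : (0 : ℝ) < (K : ℝ) := by exact_mod_cast hK
  have hK1 : (1 : ℝ) ≤ (K : ℝ) := by exact_mod_cast hK
  have hC0pos : (0 : ℝ) < C0 := by linarith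
  have ht0_20 : (20 : ℝ) ≤ t0 := by rw [ht0]; nlinarith
  have ht0pos : (0 : ℝ) < t0 := by linarith
  -- numeric exp/log facts
  have he1 : Real.exp 1 < 2.7182818286 := Real.exp_one_lt_d9
  have hepos : (0 : ℝ) < Real.exp 1 := Real.exp_pos 1
  have he2sq : Real.exp 1 ^ 2 < 7.3890561 := by nlinarith
  have hlog2 : Real.log 2 < 0.6931471808 := Real.log_two_lt_d9
  have hlog2pos : (0 : ℝ) ≤ Real.log 2 := Real.log_nonneg one_le_two
  -- T is large
  have hdiv441 : (58.6 : ℝ) < (t0 + 1) ^ 2 / Real.exp 1 ^ 2 - 1 := by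
    have h441 : (441 : ℝ) ≤ (t0 + 1) ^ 2 := by nlinarith
    have : (59.6 : ℝ) * (Real.exp 1 ^ 2) < 441 := by nlinarith
    have h2 : (59.6 : ℝ) < (t0 + 1) ^ 2 / Real.exp 1 ^ 2 := by
      rw [lt_div_iff₀ (by positivity)]
      nlinarith
    linarith
  have hTbig : (58 : ℝ) < (T : ℝ) := by linarith
  have hTpos : (0 : ℝ) < (T : ℝ) := by linarith
  have hT1pos : (0 : ℝ) < (T : ℝ) + 1 := by linarith
  set A := Real.log ((T : ℝ) + 1) with hA
  set B := Real.log (t0 + 1) with hB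
  set la := Real.log (T : ℝ) with hla
  set lb := Real.log t0 with hlb
  clear_value A B la lb
  -- A ≥ 4
  have hA4 : (4 : ℝ) ≤ A := by
    rw [hA, Real.le_log_iff_exp_le hT1pos]
    have h4 : Real.exp 4 = Real.exp 1 ^ 4 := by
      rw [← Real.exp_nat_mul]; norm_num
    have he3 : Real.exp 1 ^ 3 < 20.09 := by nlinarith
    have he4 : Real.exp 1 ^ 4 < 54.62 := by nlinarith
    rw [h4]
    linarith
  -- B ≤ 1 + A/2
  have hBA : B ≤ 1 + A / 2 := by
    have hle : (t0 + 1) ^ 2 / Real.exp 1 ^ 2 ≤ (T : ℝ) + 1 := by linarith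
    have hlog : Real.log ((t0 + 1) ^ 2 / Real.exp 1 ^ 2) ≤ A := by
      rw [hA]
      apply Real.log_le_log (by positivity) hle
    rw [Real.log_div (by positivity) (by positivity), Real.log_pow, Real.log_pow,
      Real.log_exp] at hlog
    rw [hB]
    push_cast at hlog
    linarith
  have hBpos : (0 : ℝ) ≤ B := by rw [hB]; exact Real.log_nonneg (by linarith)
  have hβA : A / 2 ≤ 1 + A - B := by linarith
  -- A - la ≤ 1/58, lb ≤ B
  have hala : A - la ≤ 1 / 58 := by
    have h1 : Real.log (((T : ℝ) + 1) / T) ≤ ((T : ℝ) + 1) / T - 1 :=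
      Real.log_le_sub_one_of_pos (by positivity)
    rw [Real.log_div (by positivity) (ne_of_gt hTpos)] at h1
    have h2 : ((T : ℝ) + 1) / T - 1 = 1 / T := by field_simp; ring
    have h3 : (1 : ℝ) / T ≤ 1 / 58 := one_div_le_one_div_of_le (by norm_num) hTbig.le
    rw [hA, hla]
    linarith
  have hlbB : lb ≤ B := by
    rw [hlb, hB]
    exact Real.log_le_log ht0pos (by linarith)
  have hαA : A / 2 - 1 / 58 ≤ 1 + la - lb := by linarith
  have hαpos : (0 : ℝ) < 1 + la - lb := by linarith
  -- floor of t0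
  set m := ⌊t0⌋₊ with hm
  clear_value m
  have hm_le : (m : ℝ) ≤ t0 := by rw [hm]; exact Nat.floor_le ht0pos.le
  have hm_lt : t0 < (m : ℝ) + 1 := by rw [hm]; exact Nat.lt_floor_add_one t0
  have hm20 : 20 ≤ m := by rw [hm]; exact Nat.le_floor (by exact_mod_cast ht0_20)
  have hm20' : (20 : ℝ) ≤ (m : ℝ) := by exact_mod_cast hm20
  have hTt0 : t0 + 1 < (T : ℝ) := by
    have hdiv : t0 + 2 ≤ (t0 + 1) ^ 2 / Real.exp 1 ^ 2 := by
      rw [le_div_iff₀ (by positivity)]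
      nlinarith
    linarith
  have hmT : m + 1 ≤ T := by
    have : ((m : ℝ)) + 1 < (T : ℝ) := by linarith
    have h2 : m + 1 < T := by exact_mod_cast this
    omega
  have hmT' : m ≤ T := by omega
  -- the Bernoulli parameter
  set p : ℕ → ℝ := fun t => min 1 (t0 / (t : ℝ)) / (K : ℝ) with hp
  clear_value p
  have hp_nonneg : ∀ t, 0 ≤ p t := by
    intro t
    rw [hp]
    have : (0 : ℝ) ≤ min 1 (t0 / (t : ℝ)) :=
      le_min zero_le_one (div_nonneg ht0pos.le (Nat.cast_nonneg t))
    positivity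
  have hp_le : ∀ t, p t ≤ 1 := by
    intro t
    rw [hp]
    rw [div_le_one hKpos]
    exact le_trans (min_le_left _ _) hK1
  -- integrability of X t
  have hint_X : ∀ t, Integrable (X t) μ := by
    intro t
    refine (integrable_const (1 : ℝ)).mono' (hmeas t).aestronglyMeasurable
      (ae_of_all _ fun ω => ?_)
    rcases hval t ω with h | h <;> simp [h]
  -- expectation of X t
  have hEX : ∀ t ∈ Finset.Icc 1 T, ∫ ω, X t ω ∂μ = p t := by
    intro t ht
    have hsm : MeasurableSet {ω | X t ω = 1} := hmeas t (measurableSet_singleton 1)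
    have hXeq : X t = Set.indicator {ω | X t ω = 1} (fun _ => (1 : ℝ)) := by
      funext ω
      by_cases h : X t ω = 1
      · have hmem : ω ∈ {ω | X t ω = 1} := h
        rw [Set.indicator_of_mem hmem, h]
      · have hmem : ω ∉ {ω | X t ω = 1} := h
        rw [Set.indicator_of_notMem hmem]
        rcases hval t ω with h0 | h1
        · exact h0
        · exact absurd h1 h
    have : (∫ ω, X t ω ∂μ) = ∫ ω, Set.indicator {ω | X t ω = 1} (fun _ => (1 : ℝ)) ω ∂μ := by
      rw [← hXeq]
    have hmin : (0 : ℝ) ≤ min 1 (t0 / (t : ℝ)) :=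
      le_min zero_le_one (div_nonneg ht0pos.le (Nat.cast_nonneg t))
    rw [this, integral_indicator_const _ hsm, measureReal_def, hprob t ht, smul_eq_mul, mul_one,
      ENNReal.toReal_ofReal (by positivity), hp]
  -- mgf of each X t
  have hmgf_t : ∀ (l : ℝ), ∀ t ∈ Finset.Icc 1 T,
      mgf (X t) μ l = 1 + (Real.exp l - 1) * p t := by
    intro l t ht
    have hpoint : (fun ω => Real.exp (l * X t ω))
        = fun ω => 1 + (Real.exp l - 1) * X t ω := by
      funext ω
      rcases hval t ω with h | h
      · rw [h, mul_zero, Real.exp_zero, mul_zero, add_zero]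
      · rw [h, mul_one, mul_one]; ring
    unfold mgf
    rw [hpoint, integral_add (integrable_const 1) ((hint_X t).const_mul (Real.exp l - 1)),
      integral_const, MeasureTheory.integral_const_mul, hEX t ht]
    simp
  -- S
  set S : Ω → ℝ := fun ω => ∑ t ∈ Finset.Icc 1 T, X t ω with hSdef
  have hSfun : S = ∑ t ∈ Finset.Icc 1 T, X t := by
    funext ω; rw [hSdef]; simp [Finset.sum_apply]
  have hSmeas : Measurable S := by
    rw [hSdef]
    exact Finset.measurable_sum _ fun t _ => hmeas t
  -- integrability of exp (l * S)
  have hint_exp : ∀ (l : ℝ) (i : ℕ), Integrable (fun ω => Real.exp (l * X i ω)) μ := by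
    intro l i
    refine (integrable_const (Real.exp |l|)).mono'
      (((hmeas i).const_mul l).exp.aestronglyMeasurable) (ae_of_all _ fun ω => ?_)
    rw [Real.norm_eq_abs, Real.abs_exp, Real.exp_le_exp]
    rcases hval i ω with h | h
    · rw [h, mul_zero]; exact abs_nonneg l
    · rw [h, mul_one]; exact le_abs_self l
  have hint_expS : ∀ l : ℝ, Integrable (fun ω => Real.exp (l * S ω)) μ := by
    intro l
    have h := hindep.integrable_exp_mul_sum hmeas (s := Finset.Icc 1 T)
      (fun i _ => hint_exp l i)
    rwa [← hSfun] at h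
  -- total mean
  set P := ∑ t ∈ Finset.Icc 1 T, p t with hPdef
  clear_value P
  have hP_nonneg : (0 : ℝ) ≤ P := by
    rw [hPdef]; exact Finset.sum_nonneg fun t _ => hp_nonneg t
  -- mgf bound for S
  have hmgfS_le : ∀ l : ℝ, mgf S μ l ≤ Real.exp ((Real.exp l - 1) * P) := by
    intro l
    rw [hSfun, hindep.mgf_sum hmeas]
    calc ∏ t ∈ Finset.Icc 1 T, mgf (X t) μ l
        = ∏ t ∈ Finset.Icc 1 T, (1 + (Real.exp l - 1) * p t) :=
          Finset.prod_congr rfl (hmgf_t l)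
      _ ≤ ∏ t ∈ Finset.Icc 1 T, Real.exp ((Real.exp l - 1) * p t) := by
          apply Finset.prod_le_prod
          · intro t _
            nlinarith [Real.exp_pos l, hp_nonneg t, hp_le t,
              mul_nonneg (Real.exp_pos l).le (hp_nonneg t)]
          · intro t _
            linarith [Real.add_one_le_exp ((Real.exp l - 1) * p t)]
      _ = Real.exp (∑ t ∈ Finset.Icc 1 T, (Real.exp l - 1) * p t) := (Real.exp_sum _ _).symm
      _ = Real.exp ((Real.exp l - 1) * P) := by rw [← Finset.mul_sum, ← hPdef]
  -- split the sum: K * P = m + t0 * H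
  set H := ∑ t ∈ Finset.Ioc m T, (1 / (t : ℝ)) with hH
  clear_value H
  have hKP : (K : ℝ) * P = (m : ℝ) + t0 * H := by
    have hIcc : Finset.Icc 1 T = Finset.Ioc 0 T := Finset.Icc_add_one_left_eq_Ioc 0 T
    have hsplit : P = (∑ t ∈ Finset.Ioc 0 m, p t) + ∑ t ∈ Finset.Ioc m T, p t := by
      rw [hPdef, hIcc, Finset.sum_Ioc_consecutive _ (Nat.zero_le m) hmT']
    have h1 : (∑ t ∈ Finset.Ioc 0 m, p t) = (m : ℝ) / K := by
      have : ∀ t ∈ Finset.Ioc 0 m, p t = 1 / (K : ℝ) := by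
        intro t ht
        rw [Finset.mem_Ioc] at ht
        have htpos : (0 : ℝ) < (t : ℝ) := by exact_mod_cast ht.1
        have htm : (t : ℝ) ≤ (m : ℝ) := by exact_mod_cast ht.2
        rw [hp]
        simp only []
        rw [min_eq_left ((one_le_div htpos).mpr (by linarith))]
      rw [Finset.sum_congr rfl this, Finset.sum_const, Nat.card_Ioc]
      simp [nsmul_eq_mul]
      ring
    have h2 : (∑ t ∈ Finset.Ioc m T, p t) = (t0 / K) * H := by
      rw [hH, Finset.mul_sum]
      apply Finset.sum_congr rfl
      intro t ht
      rw [Finset.mem_Ioc] at ht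
      have htm : (m : ℝ) + 1 ≤ (t : ℝ) := by exact_mod_cast ht.1
      have htpos : (0 : ℝ) < (t : ℝ) := by linarith
      rw [hp]
      simp only []
      rw [min_eq_right (((div_le_one htpos).mpr (by linarith)))]
      ring
    rw [hsplit, h1, h2]
    field_simp
  -- harmonic bounds
  have hH_low : Real.log ((T : ℝ) + 1) - Real.log ((m : ℝ) + 1) ≤ H := by
    rw [hH]; exact harmonic_lower (by omega) hmT'
  have hH_up : H ≤ Real.log (T : ℝ) - Real.log (m : ℝ) := by
    rw [hH]; exact harmonic_upper (by omega) hmT'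
  -- bounds on P
  have hlogm1 : Real.log ((m : ℝ) + 1) ≤ B := by
    rw [hB]; exact Real.log_le_log (by positivity) (by linarith)
  have hP1 : 2 * C0 * (1 + A - B) - 1 ≤ P := by
    have hKP_low : (m : ℝ) + t0 * (A - Real.log ((m : ℝ) + 1)) ≤ (K : ℝ) * P := by
      rw [hKP, hA]
      linarith only [mul_nonneg ht0pos.le (sub_nonneg.mpr hH_low)]
    have h1 : 2 * C0 * (K : ℝ) * (1 + A - B) - 1 ≤ (K : ℝ) * P := by
      rw [← ht0]
      linarith only [hKP_low, hm_lt, mul_nonneg ht0pos.le (sub_nonneg.mpr hlogm1)]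
    nlinarith only [h1, sub_nonneg.mpr hK1, hKpos]
  have hP2 : P ≤ 2 * C0 * (1 + la - lb) + 1 / 20 := by
    have hlogm : lb - Real.log (m : ℝ) ≤ (t0 - m) / m := by
      have h1 : Real.log (t0 / m) ≤ t0 / m - 1 :=
        Real.log_le_sub_one_of_pos (by positivity)
      rw [Real.log_div (ne_of_gt ht0pos) (by positivity)] at h1
      have h2 : t0 / (m : ℝ) - 1 = (t0 - m) / m := by field_simp
      rw [hlb]
      linarith
    have hKP_up : (K : ℝ) * P ≤ (m : ℝ) + t0 * (la - Real.log (m : ℝ)) := by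
      rw [hKP, hla]
      linarith only [mul_nonneg ht0pos.le (sub_nonneg.mpr hH_up)]
    have hkey : (m : ℝ) + t0 * (la - Real.log (m : ℝ)) ≤ t0 * (1 + la - lb) + 1 / 20 := by
      have h3 : t0 * (lb - Real.log (m : ℝ)) ≤ t0 * ((t0 - m) / m) :=
        mul_le_mul_of_nonneg_left hlogm ht0pos.le
      have h4 : t0 * ((t0 - m) / m) = t0 * (t0 - m) / m := by ring
      have hmpos : (0 : ℝ) < (m : ℝ) := by linarith only [hm20']
      have h5 : (m : ℝ) - t0 + t0 * (t0 - m) / m ≤ 1 / 20 := by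
        have he : (m : ℝ) - t0 + t0 * (t0 - m) / m = ((t0 - m) ^ 2 + (m - t0) * m + t0 * (t0 - m) - (t0 - m) ^ 2) / m + (t0 - m) ^ 2 / m - (t0 - m) ^ 2 / m := by
          field_simp
          ring
        have he2 : (m : ℝ) - t0 + t0 * (t0 - m) / m = (t0 - m) ^ 2 / m := by
          field_simp
          ring
        rw [he2, div_le_iff₀ hmpos]
        nlinarith only [hm_le, hm_lt, hm20']
      linarith only [h3, h4, h5]
    have h1 : (K : ℝ) * P ≤ 2 * C0 * (K : ℝ) * (1 + la - lb) + 1 / 20 := by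
      rw [← ht0]
      linarith only [hKP_up, hkey]
    nlinarith only [h1, sub_nonneg.mpr hK1, hKpos]
  -- exp(2/5) ≤ 1.492
  have hexp25 : Real.exp (2 / 5) ≤ 1.492 := by
    have h5 : Real.exp (2 / 5) ^ 5 = Real.exp 1 ^ 2 := by
      rw [← Real.exp_nat_mul, ← Real.exp_nat_mul]
      norm_num
    by_contra hcon
    push_neg at hcon
    have h1 : (1.492 : ℝ) ^ 5 < Real.exp (2 / 5) ^ 5 := by
      apply pow_lt_pow_left₀ hcon (by norm_num)
      norm_num
    rw [h5] at h1
    nlinarith only [h1, he1, hepos]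
  have hexp25_1 : (1 : ℝ) ≤ Real.exp (2 / 5) := by
    linarith [Real.add_one_le_exp (2 / 5 : ℝ)]
  -- abbreviations for the thresholds
  set L := C0 * (1 + A - B) with hLdef
  set U := 3 * C0 * (1 + la - lb) with hUdef
  clear_value L U
  -- lower tail
  have hCbL : 5 * A ≤ L := by
    rw [hLdef]
    nlinarith only [hβA, hA4, hC0,
      mul_nonneg (by linarith only [hC0] : (0:ℝ) ≤ C0 - 10) (by linarith only [hβA, hA4] : (0:ℝ) ≤ (1 + A - B) - A / 2),
      mul_nonneg (by linarith only [hC0] : (0:ℝ) ≤ C0 - 10) (by linarith only [hA4] : (0:ℝ) ≤ A)]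
  have hP1L : 2 * L - 1 ≤ P := by rw [hLdef]; linarith only [hP1]
  have htail1 : (μ {ω | S ω ≤ L}).toReal ≤ 1 / ((T : ℝ) + 1) := by
    have hl1 : (-Real.log 2 : ℝ) ≤ 0 := by linarith
    have hcher := measure_le_le_exp_mul_mgf (μ := μ) (X := S) L hl1 (hint_expS _)
    have hexpl1 : Real.exp (-Real.log 2) = 1 / 2 := by
      rw [Real.exp_neg, Real.exp_log two_pos]
      norm_num
    have hmb := hmgfS_le (-Real.log 2)
    rw [hexpl1] at hmb
    have h2 : Real.exp (-(-Real.log 2) * L) * mgf S μ (-Real.log 2)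
        ≤ Real.exp (Real.log 2 * L) * Real.exp ((1 / 2 - 1) * P) := by
      rw [neg_neg]
      exact mul_le_mul_of_nonneg_left hmb (Real.exp_nonneg _)
    rw [← Real.exp_add] at h2
    have h3 : Real.exp (Real.log 2 * L + (1 / 2 - 1) * P) ≤ 1 / ((T : ℝ) + 1) := by
      have he : (1 : ℝ) / ((T : ℝ) + 1) = Real.exp (-A) := by
        rw [hA, Real.exp_neg, Real.exp_log hT1pos, one_div]
      rw [he]
      apply Real.exp_le_exp.mpr
      nlinarith only [hP1L, hA4, hCbL, hlog2, hlog2pos,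
        mul_nonneg (sub_nonneg.mpr hCbL) (by linarith only [hlog2] : (0:ℝ) ≤ 0.6931471808 - Real.log 2),
        mul_nonneg (by linarith only [hA4] : (0:ℝ) ≤ A) (by linarith only [hlog2] : (0:ℝ) ≤ 0.6931471808 - Real.log 2)]
    rw [measureReal_def] at hcher
    linarith
  -- upper tail
  have hCaU : 15 * A - 30 / 58 ≤ U := by
    rw [hUdef]
    nlinarith only [hαA, hA4, hC0,
      mul_nonneg (by linarith only [hC0] : (0:ℝ) ≤ C0 - 10) (by linarith only [hαA, hA4] : (0:ℝ) ≤ (1 + la - lb) - (A / 2 - 1 / 58)),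
      mul_nonneg (by linarith only [hC0] : (0:ℝ) ≤ C0 - 10) (by linarith only [hA4] : (0:ℝ) ≤ A)]
  have hUpos : (0 : ℝ) ≤ U := by linarith only [hCaU, hA4]
  have hP2U : P ≤ 2 / 3 * U + 1 / 20 := by rw [hUdef]; linarith only [hP2]
  have htail2 : (μ {ω | U ≤ S ω}).toReal ≤ 1 / ((T : ℝ) + 1) := by
    have hcher := measure_ge_le_exp_mul_mgf (μ := μ) (X := S) U (by norm_num : (0:ℝ) ≤ 2/5)
      (hint_expS _)
    have hmb := hmgfS_le (2 / 5)
    have h2 : Real.exp (-(2 / 5) * U) * mgf S μ (2 / 5)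
        ≤ Real.exp (-(2 / 5) * U) * Real.exp ((Real.exp (2 / 5) - 1) * P) :=
      mul_le_mul_of_nonneg_left hmb (Real.exp_nonneg _)
    rw [← Real.exp_add] at h2
    have h3 : Real.exp (-(2 / 5) * U + (Real.exp (2 / 5) - 1) * P) ≤ 1 / ((T : ℝ) + 1) := by
      have he : (1 : ℝ) / ((T : ℝ) + 1) = Real.exp (-A) := by
        rw [hA, Real.exp_neg, Real.exp_log hT1pos, one_div]
      rw [he]
      apply Real.exp_le_exp.mpr
      nlinarith only [hCaU, hA4,
        mul_nonneg (by linarith only [hexp25_1] : (0:ℝ) ≤ Real.exp (2/5) - 1) (sub_nonneg.mpr hP2U),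
        mul_nonneg (by linarith only [hexp25] : (0:ℝ) ≤ 1.492 - Real.exp (2/5)) hUpos]
    exact le_trans hcher (le_trans h2 h3)
  -- assemble
  have hmeasA : MeasurableSet {ω | L ≤ S ω ∧ S ω ≤ U} := by
    have heq : {ω | L ≤ S ω ∧ S ω ≤ U} = {ω | L ≤ S ω} ∩ {ω | S ω ≤ U} := rfl
    rw [heq]
    exact (measurableSet_le measurable_const hSmeas).inter
      (measurableSet_le hSmeas measurable_const)
  have hsub : {ω | L ≤ S ω ∧ S ω ≤ U}ᶜ ⊆ {ω | S ω ≤ L} ∪ {ω | U ≤ S ω} := by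
    intro ω hω
    simp only [Set.mem_compl_iff, Set.mem_setOf_eq, not_and_or, not_le] at hω
    rcases hω with h | h
    · exact Or.inl h.le
    · exact Or.inr h.le
  have h1 : μ {ω | L ≤ S ω ∧ S ω ≤ U}ᶜ ≤ μ {ω | S ω ≤ L} + μ {ω | U ≤ S ω} :=
    (measure_mono hsub).trans (measure_union_le _ _)
  have h3 : (μ {ω | L ≤ S ω ∧ S ω ≤ U}ᶜ).toReal
      ≤ (μ {ω | S ω ≤ L}).toReal + (μ {ω | U ≤ S ω}).toReal := by
    have h2 := ENNReal.toReal_mono (by finiteness) h1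
    rwa [ENNReal.toReal_add (measure_ne_top _ _) (measure_ne_top _ _)] at h2
  have h4 : (μ {ω | L ≤ S ω ∧ S ω ≤ U}ᶜ).toReal = 1 - (μ {ω | L ≤ S ω ∧ S ω ≤ U}).toReal := by
    rw [prob_compl_eq_one_sub hmeasA,
      ENNReal.toReal_sub_of_le prob_le_one ENNReal.one_ne_top, ENNReal.toReal_one]
  have hfinal : 1 - 2 / ((T : ℝ) + 1) ≤ (μ {ω | L ≤ S ω ∧ S ω ≤ U}).toReal := by
    have : 2 / ((T : ℝ) + 1) = 1 / ((T : ℝ) + 1) + 1 / ((T : ℝ) + 1) := by ring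
    linarith
  rw [hSdef] at hfinal
  exact hfinal
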